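/- For every integer k ≥ 1, the power series Z_k = Σₙ (−1)ⁿ · binom(n+k, k) · σⁿ ∈ ℂ[[σ]] can be written as a product of 2k+2 convergent power series, but there do NOT exist ℓ ∈ ℕ and convergent power series X_{i,j} ∈ ℂ[[σ]] (1 ≤ i ≤ ℓ, 1 ≤ j ≤ k) with Z_k = Σ_{i=1}^{ℓ} Π_{j=1}^{k} X_{i,j}. (The multiplicative grading of the classical summation does not stabilize.) -/

import Mathlib

open PowerSeries Filter Finset

lemma rchoose_succ (r : ℂ) (n : ℕ) :
    Ring.choose r (n + 1) = Ring.choose r n * (r - n) / (n + 1) := by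
  have h := Ring.descPochhammer_eq_factorial_smul_choose (R := ℂ) r (n + 1)
  rw [descPochhammer_succ_right, Polynomial.smeval_mul,
    Ring.descPochhammer_eq_factorial_smul_choose] at h
  have h2 : (Polynomial.X - (n : Polynomial ℤ)).smeval r = r - n := by
    simp [Polynomial.smeval_sub, Polynomial.smeval_X, Polynomial.smeval_natCast]
  rw [h2, nsmul_eq_mul, nsmul_eq_mul, Nat.factorial_succ, Nat.cast_mul] at h
  have hn : ((n : ℂ) + 1) ≠ 0 := Nat.cast_add_one_ne_zero n
  have hf : ((n.factorial : ℕ) : ℂ) ≠ 0 := Nat.cast_ne_zero.mpr n.factorial_ne_zero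
  rw [eq_div_iff hn]
  apply mul_left_cancel₀ hf
  push_cast at h ⊢
  linear_combination -h

lemma rchoose_neg (k n : ℕ) :
    Ring.choose (-(k : ℂ) - 1) n = (-1) ^ n * ((n + k).choose k : ℂ) := by
  induction n with
  | zero => simp [Ring.choose_zero_right]
  | succ n ih =>
    rw [rchoose_succ, ih]
    have h1 : (n + k).choose n = (n + k).choose k := Nat.choose_symm_add
    have h2 := Nat.add_one_mul_choose_eq (n + k) n
    have h3 : (n + k).succ.choose n.succ = (n + 1 + k).choose k := by
      have he : (n + k).succ = (n + 1) + k := by omega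
      rw [he, Nat.add_comm (n+1) k, Nat.choose_symm_add, Nat.add_comm k (n+1)]
    rw [h3, h1] at h2
    have hcast := congrArg (Nat.cast (R := ℂ)) h2
    push_cast at hcast
    have hn : ((n : ℂ) + 1) ≠ 0 := Nat.cast_add_one_ne_zero n
    rw [div_eq_iff hn]
    linear_combination (-(-1:ℂ)^n) * hcast

noncomputable def Bser (r : ℂ) : PowerSeries ℂ := PowerSeries.mk fun n => Ring.choose r n

lemma Bser_mul (r s : ℂ) : Bser r * Bser s = Bser (r + s) := by
  ext n
  rw [PowerSeries.coeff_mul]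
  simp only [Bser, PowerSeries.coeff_mk]
  rw [Ring.add_choose_eq n (Commute.all r s)]

lemma Bser_zero : Bser 0 = 1 := by
  ext n
  simp only [Bser, PowerSeries.coeff_mk, PowerSeries.coeff_one]
  have : ((0:ℕ) : ℂ) = (0 : ℂ) := by norm_num
  rw [← this, Ring.choose_natCast]
  rcases n with _ | n <;> simp

lemma Bser_pow (r : ℂ) (m : ℕ) : Bser r ^ m = Bser (m * r) := by
  induction m with
  | zero => simp [Bser_zero]
  | succ m ih =>
    rw [pow_succ, ih, Bser_mul, Nat.cast_succ, add_mul, one_mul]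

noncomputable def aseq : ℕ → ℝ :=
  fun n => Nat.rec 1 (fun n a => a * ((2 * n + 1) / (2 * n + 2))) n

@[simp] lemma aseq_zero : aseq 0 = 1 := rfl

lemma aseq_succ (n : ℕ) : aseq (n + 1) = aseq n * ((2 * n + 1) / (2 * n + 2)) := rfl

lemma aseq_nonneg (n : ℕ) : 0 ≤ aseq n := by
  induction n with
  | zero => norm_num
  | succ n ih =>
    rw [aseq_succ]
    positivity

lemma aseq_antitone : Antitone aseq := by
  apply antitone_nat_of_succ_le
  intro n
  rw [aseq_succ]
  have h : (2 * (n:ℝ) + 1) / (2 * n + 2) ≤ 1 := by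
    rw [div_le_one (by positivity)]; linarith
  calc aseq n * ((2 * n + 1) / (2 * n + 2)) ≤ aseq n * 1 :=
        mul_le_mul_of_nonneg_left h (aseq_nonneg n)
    _ = aseq n := mul_one _

lemma aseq_sq (n : ℕ) : aseq n ^ 2 * (n + 1) ≤ 1 := by
  induction n with
  | zero => norm_num
  | succ n ih =>
    rw [aseq_succ]
    have hd : (0:ℝ) < 2 * n + 2 := by positivity
    have key : ((2 * (n:ℝ) + 1) / (2 * n + 2)) ^ 2 * ((n:ℝ) + 1 + 1) ≤ ((n:ℝ) + 1) := by
      rw [div_pow, div_mul_eq_mul_div, div_le_iff₀ (by positivity)]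
      nlinarith [sq_nonneg ((n:ℝ))]
    have h1 : aseq n ^ 2 ≥ 0 := sq_nonneg _
    push_cast
    calc (aseq n * ((2 * n + 1) / (2 * n + 2))) ^ 2 * ((n:ℝ) + 1 + 1)
        = aseq n ^ 2 * (((2 * (n:ℝ) + 1) / (2 * n + 2)) ^ 2 * ((n:ℝ) + 1 + 1)) := by
          push_cast; ring
      _ ≤ aseq n ^ 2 * ((n:ℝ) + 1) := mul_le_mul_of_nonneg_left key h1
      _ ≤ 1 := by exact_mod_cast ih
    
lemma aseq_tendsto : Tendsto aseq atTop (nhds 0) := by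
  have hub : ∀ n, aseq n ≤ Real.sqrt (1 / (n + 1)) := by
    intro n
    have h1 : aseq n ^ 2 ≤ 1 / ((n:ℝ) + 1) := by
      rw [le_div_iff₀ (by positivity)]
      exact_mod_cast aseq_sq n
    have := Real.sqrt_le_sqrt h1
    rwa [Real.sqrt_sq (aseq_nonneg n)] at this
  have hs : Tendsto (fun n : ℕ => Real.sqrt (1 / (n + 1))) atTop (nhds 0) := by
    rw [show (0:ℝ) = Real.sqrt 0 by simp]
    exact (Real.continuous_sqrt.tendsto 0).comp tendsto_one_div_add_atTop_nhds_zero_nat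
  exact squeeze_zero aseq_nonneg hub hs

lemma rchoose_half (n : ℕ) :
    Ring.choose (-(1/2) : ℂ) n = (-1) ^ n * ((aseq n : ℝ) : ℂ) := by
  induction n with
  | zero => simp [Ring.choose_zero_right]
  | succ n ih =>
    rw [rchoose_succ, ih, aseq_succ]
    have hn : ((n : ℂ) + 1) ≠ 0 := Nat.cast_add_one_ne_zero n
    rw [div_eq_iff hn]
    push_cast
    have hd : (2 * (n:ℂ) + 2) ≠ 0 := by
      intro h
      have : ((n:ℂ) + 1) = 0 := by linear_combination h / 2
      exact hn this
    field_simp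
    ring

lemma Bser_half_convergent_aux :
    ∃ l : ℂ, Tendsto (fun N : ℕ => ∑ n ∈ Finset.range N, Ring.choose (-(1/2) : ℂ) n)
      atTop (nhds l) := by
  obtain ⟨l, hl⟩ := aseq_antitone.tendsto_alternating_series_of_tendsto_zero aseq_tendsto
  refine ⟨(l : ℂ), ?_⟩
  have heq : (fun N : ℕ => ∑ n ∈ Finset.range N, Ring.choose (-(1/2) : ℂ) n)
      = fun N : ℕ => ((∑ n ∈ Finset.range N, (-1 : ℝ) ^ n * aseq n : ℝ) : ℂ) := by
    funext N
    push_cast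
    exact Finset.sum_congr rfl fun n _ => rchoose_half n
  rw [heq]
  exact (Complex.continuous_ofReal.tendsto l).comp hl

lemma coeff_bound {X : PowerSeries ℂ}
    (h : ∃ l : ℂ, Tendsto (fun N : ℕ => ∑ n ∈ Finset.range N, PowerSeries.coeff n X)
      atTop (nhds l)) :
    ∃ M : ℝ, ∀ n, ‖PowerSeries.coeff n X‖ ≤ M := by
  obtain ⟨l, hl⟩ := h
  have hc : Tendsto (fun n : ℕ => PowerSeries.coeff n X) atTop (nhds 0) := by
    have h2 := ((hl.comp (tendsto_add_atTop_nat 1)).sub hl)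
    simp only [Function.comp_def, Finset.sum_range_succ, sub_self] at h2
    simpa using h2
  have hn : Tendsto (fun n : ℕ => ‖PowerSeries.coeff n X‖) atTop (nhds 0) := by
    simpa using hc.norm
  obtain ⟨M, hM⟩ := hn.bddAbove_range
  exact ⟨M, fun n => hM (Set.mem_range_self n)⟩

lemma prod_coeff_bound (M : ℝ) (hM : 0 ≤ M) :
    ∀ (m : ℕ) (X : Fin (m + 1) → PowerSeries ℂ),
      (∀ j n, ‖PowerSeries.coeff n (X j)‖ ≤ M) →
      ∀ n, ‖PowerSeries.coeff n (∏ j, X j)‖ ≤ M ^ (m + 1) * ((n : ℝ) + 1) ^ m := by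
  intro m
  induction m with
  | zero =>
    intro X hX n
    simpa [Fin.prod_univ_one] using hX 0 n
  | succ m ih =>
    intro X hX n
    rw [Fin.prod_univ_succ, PowerSeries.coeff_mul]
    refine le_trans (norm_sum_le _ _) ?_
    have hb : ∀ p ∈ Finset.HasAntidiagonal.antidiagonal n,
        ‖PowerSeries.coeff p.1 (X 0) * PowerSeries.coeff p.2 (∏ j : Fin (m + 1), X j.succ)‖
          ≤ M ^ (m + 2) * ((n : ℝ) + 1) ^ m := by
      intro p hp
      rw [norm_mul]
      have hp2 : p.2 ≤ n := by
        have := Finset.HasAntidiagonal.mem_antidiagonal.mp hp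
        omega
      have hb2 : ‖PowerSeries.coeff p.2 (∏ j : Fin (m + 1), X j.succ)‖
          ≤ M ^ (m + 1) * ((p.2 : ℝ) + 1) ^ m :=
        ih (fun j => X j.succ) (fun j n => hX j.succ n) p.2
      have hmono : ((p.2 : ℝ) + 1) ^ m ≤ ((n : ℝ) + 1) ^ m := by
        apply pow_le_pow_left₀ (by positivity)
        have : (p.2 : ℝ) ≤ n := by exact_mod_cast hp2
        linarith
      calc ‖PowerSeries.coeff p.1 (X 0)‖ * ‖PowerSeries.coeff p.2 (∏ j : Fin (m + 1), X j.succ)‖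
          ≤ M * (M ^ (m + 1) * ((p.2 : ℝ) + 1) ^ m) :=
            mul_le_mul (hX 0 p.1) hb2 (norm_nonneg _) hM
        _ ≤ M * (M ^ (m + 1) * ((n : ℝ) + 1) ^ m) := by
            apply mul_le_mul_of_nonneg_left _ hM
            exact mul_le_mul_of_nonneg_left hmono (by positivity)
        _ = M ^ (m + 2) * ((n : ℝ) + 1) ^ m := by ring
    refine le_trans (Finset.sum_le_sum hb) ?_
    rw [Finset.sum_const, Nat.card_antidiagonal, nsmul_eq_mul]
    apply le_of_eq
    push_cast
    ring

/-- A formal power series over `ℂ` is convergent if its sequence of partial sums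
converges. -/
def Convergent (X : PowerSeries ℂ) : Prop :=
  ∃ l : ℂ, Filter.Tendsto (fun N : ℕ => ∑ n ∈ Finset.range N, PowerSeries.coeff n X)
    Filter.atTop (nhds l)

theorem grading_does_not_stabilize (k : ℕ) (hk : 1 ≤ k) :
    (∃ Y : Fin (2 * k + 2) → PowerSeries ℂ, (∀ j, Convergent (Y j)) ∧
      PowerSeries.mk (fun n : ℕ => (-1 : ℂ) ^ n * ((n + k).choose k : ℂ)) =
        ∏ j : Fin (2 * k + 2), Y j) ∧
    ¬ (∃ (ℓ : ℕ) (X : Fin ℓ → Fin k → PowerSeries ℂ), (∀ i j, Convergent (X i j)) ∧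
      PowerSeries.mk (fun n : ℕ => (-1 : ℂ) ^ n * ((n + k).choose k : ℂ)) =
        ∑ i : Fin ℓ, ∏ j : Fin k, X i j) := by
  constructor
  · refine ⟨fun _ => Bser (-(1/2)), fun _ => ?_, ?_⟩
    · obtain ⟨l, hl⟩ := Bser_half_convergent_aux
      refine ⟨l, ?_⟩
      simpa only [Bser, PowerSeries.coeff_mk] using hl
    · rw [Finset.prod_const, Finset.card_univ, Fintype.card_fin, Bser_pow]
      have harg : ((2 * k + 2 : ℕ) : ℂ) * (-(1/2)) = -(k : ℂ) - 1 := by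
        push_cast; ring
      rw [harg]
      ext n
      rw [PowerSeries.coeff_mk]
      unfold Bser
      rw [PowerSeries.coeff_mk, rchoose_neg]
  · rintro ⟨ℓ, X, hconv, heq⟩
    choose M hM using fun i j => coeff_bound (hconv i j)
    set B : ℝ := 1 + ∑ i, ∑ j, |M i j| with hBdef
    have hS : (0:ℝ) ≤ ∑ i, ∑ j, |M i j| :=
      Finset.sum_nonneg fun _ _ => Finset.sum_nonneg fun _ _ => abs_nonneg _
    have hB0 : (0:ℝ) ≤ B := by rw [hBdef]; linarith
    have hB1 : (1:ℝ) ≤ B := by rw [hBdef]; linarith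
    have hBij : ∀ i j n, ‖PowerSeries.coeff n (X i j)‖ ≤ B := by
      intro i j n
      refine (hM i j n).trans ?_
      have h1 : |M i j| ≤ ∑ j', |M i j'| :=
        Finset.single_le_sum (f := fun j' => |M i j'|) (fun _ _ => abs_nonneg _)
          (Finset.mem_univ j)
      have h2 : ∑ j', |M i j'| ≤ ∑ i', ∑ j', |M i' j'| :=
        Finset.single_le_sum (f := fun i' => ∑ j', |M i' j'|)
          (fun _ _ => Finset.sum_nonneg fun _ _ => abs_nonneg _) (Finset.mem_univ i)
      have := le_abs_self (M i j)
      rw [hBdef]; linarith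
    obtain ⟨m, rfl⟩ : ∃ m, k = m + 1 := ⟨k - 1, by omega⟩
    have hprod : ∀ (i : Fin ℓ) (n : ℕ),
        ‖PowerSeries.coeff n (∏ j, X i j)‖ ≤ B ^ (m + 1) * ((n:ℝ) + 1) ^ m :=
      fun i => prod_coeff_bound B hB0 m (X i) (hBij i)
    have hsum : ∀ n : ℕ, (((n + (m+1)).choose (m+1) : ℕ) : ℝ)
        ≤ (ℓ : ℝ) * (B ^ (m + 1) * ((n:ℝ) + 1) ^ m) := by
      intro n
      have hval : ‖PowerSeries.coeff n
          (PowerSeries.mk (fun n : ℕ => (-1 : ℂ) ^ n * ((n + (m+1)).choose (m+1) : ℂ)))‖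
          = (((n + (m+1)).choose (m+1) : ℕ) : ℝ) := by
        rw [PowerSeries.coeff_mk, norm_mul, norm_pow, norm_neg, norm_one, one_pow, one_mul,
          Complex.norm_natCast]
      rw [← hval, heq, map_sum]
      refine le_trans (norm_sum_le _ _) ?_
      refine le_trans (Finset.sum_le_sum fun i _ => hprod i n) ?_
      rw [Finset.sum_const, Finset.card_univ, Fintype.card_fin, nsmul_eq_mul]
    obtain ⟨n, hn⟩ := exists_nat_gt ((((m+1).factorial : ℕ) : ℝ) * ((ℓ : ℝ) * B ^ (m + 1)))
    have hlow : ((n:ℝ) + 1) ^ (m + 1)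
        ≤ (((m+1).factorial : ℕ) : ℝ) * (((n + (m+1)).choose (m+1) : ℕ) : ℝ) := by
      have h := Nat.pow_succ_le_ascFactorial (n + 1) (m + 1)
      rw [Nat.ascFactorial_eq_factorial_mul_choose] at h
      exact_mod_cast h
    have hfac : (0:ℝ) ≤ (((m+1).factorial : ℕ) : ℝ) := Nat.cast_nonneg _
    have h1 : ((n:ℝ) + 1) ^ (m + 1)
        ≤ (((m+1).factorial : ℕ) : ℝ) * ((ℓ : ℝ) * (B ^ (m + 1) * ((n:ℝ) + 1) ^ m)) :=
      le_trans hlow (mul_le_mul_of_nonneg_left (hsum n) hfac)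
    have hpos : (0:ℝ) < ((n:ℝ) + 1) ^ m := by positivity
    have hps : ((n:ℝ) + 1) ^ (m + 1) = ((n:ℝ) + 1) ^ m * ((n:ℝ) + 1) := pow_succ _ _
    have h2 : ((((m+1).factorial : ℕ) : ℝ) * ((ℓ : ℝ) * B ^ (m + 1))) * ((n:ℝ) + 1) ^ m
        < (n:ℝ) * ((n:ℝ) + 1) ^ m := mul_lt_mul_of_pos_right hn hpos
    nlinarith [h1, h2, hpos, hps]
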